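/- arXiv:2012.15581 — 4 statements merged into one kernel-verified Lean document; each statement's English description precedes it below -/
import Mathlib

section
/- Let c ∈ ℝ, let σ > 0, and let r ∈ ℕ. Then the improper integral ∫_{r+1}^∞ (c·exp(−σp))²·(2/(2p+1)) dp converges and equals c²·exp(σ)·∫_{(2r+3)σ}^∞ exp(−t)/t dt. Consequently, the a posteriori spectral error indicator ε(c,σ) = sqrt( 2a_r²/(2r+1) + ∫_{r+1}^∞ (c e^{−σp})²·2/(2p+1) dp ) admits the closed form ε(c,σ) = sqrt( 2a_r²/(2r+1) + c² e^{σ} E₁((2r+3)σ) ) for any a_r ∈ ℝ, where E₁(z) = ∫_z^∞ e^{−t}/t dt. -/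
open MeasureTheory Set Real

private lemma integral_comp_add_right_Ioi' (g : ℝ → ℝ) (a d : ℝ) :
    (∫ x in Set.Ioi a, g (x + d)) = ∫ x in Set.Ioi (a + d), g x := by
  rw [← integral_indicator measurableSet_Ioi, ← integral_indicator measurableSet_Ioi,
    ← integral_add_right_eq_self (fun x => Set.indicator (Set.Ioi (a + d)) g x) d]
  congr 1
  ext x
  simp [Set.indicator_apply, Set.mem_Ioi]

/-- The spectral a posteriori error indicator: closed form of the continuation
integral.  For `c ∈ ℝ`, `σ > 0` and `r ∈ ℕ`, the improper integral
`∫_{r+1}^∞ (c e^{-σ p})² · 2/(2p+1) dp` converges and equals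
`c² e^{σ} E₁((2r+3)σ)` where `E₁(z) = ∫_z^∞ e^{-t}/t dt`; consequently the error
indicator `ε(c,σ)` admits the stated closed form. -/
theorem spectral_error_indicator_closed_form
    (c σ : ℝ) (hσ : 0 < σ) (r : ℕ) :
    IntegrableOn (fun p : ℝ => (c * Real.exp (-σ * p)) ^ 2 * (2 / (2 * p + 1)))
      (Set.Ioi ((r : ℝ) + 1)) volume ∧
    (∫ p in Set.Ioi ((r : ℝ) + 1), (c * Real.exp (-σ * p)) ^ 2 * (2 / (2 * p + 1)))
      = c ^ 2 * Real.exp σ *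
        ∫ t in Set.Ioi ((2 * (r : ℝ) + 3) * σ), Real.exp (-t) / t ∧
    ∀ a_r : ℝ,
      Real.sqrt (2 * a_r ^ 2 / (2 * (r : ℝ) + 1) +
        ∫ p in Set.Ioi ((r : ℝ) + 1), (c * Real.exp (-σ * p)) ^ 2 * (2 / (2 * p + 1)))
      = Real.sqrt (2 * a_r ^ 2 / (2 * (r : ℝ) + 1) +
        c ^ 2 * Real.exp σ *
          ∫ t in Set.Ioi ((2 * (r : ℝ) + 3) * σ), Real.exp (-t) / t) := by
  have hr1 : (0 : ℝ) < (r : ℝ) + 1 := by positivity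
  -- Integrability of the p-integral
  have hint : IntegrableOn (fun p : ℝ => (c * Real.exp (-σ * p)) ^ 2 * (2 / (2 * p + 1)))
      (Set.Ioi ((r : ℝ) + 1)) volume := by
    have hbase : IntegrableOn (fun p : ℝ => Real.exp (-(2 * σ) * p)) (Set.Ioi ((r : ℝ) + 1))
        volume := exp_neg_integrableOn_Ioi _ (by positivity)
    have hmaj : IntegrableOn (fun p : ℝ => 2 * c ^ 2 * Real.exp (-(2 * σ) * p))
        (Set.Ioi ((r : ℝ) + 1)) volume := hbase.const_mul _
    refine Integrable.mono' hmaj ?_ ?_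
    · exact (Measurable.aestronglyMeasurable (by fun_prop)).restrict
    · filter_upwards [ae_restrict_mem measurableSet_Ioi] with p hp
      have hp0 : (0 : ℝ) < p := lt_trans hr1 hp
      have h2p : (1 : ℝ) ≤ 2 * p + 1 := by linarith
      have hfrac : 2 / (2 * p + 1) ≤ 2 := by
        rw [div_le_iff₀ (by linarith)]; nlinarith
      have hfrac0 : 0 ≤ 2 / (2 * p + 1) := by positivity
      have : (c * Real.exp (-σ * p)) ^ 2 * (2 / (2 * p + 1))
          ≤ 2 * c ^ 2 * Real.exp (-(2 * σ) * p) := by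
        have hexp : (c * Real.exp (-σ * p)) ^ 2 = c ^ 2 * Real.exp (-(2 * σ) * p) := by
          rw [mul_pow, ← Real.exp_nat_mul]
          ring_nf
        rw [hexp]
        nlinarith [sq_nonneg c, Real.exp_pos (-(2 * σ) * p), mul_nonneg (sq_nonneg c) (Real.exp_pos (-(2*σ)*p)).le]
      calc ‖(c * Real.exp (-σ * p)) ^ 2 * (2 / (2 * p + 1))‖
          = (c * Real.exp (-σ * p)) ^ 2 * (2 / (2 * p + 1)) := by
            rw [Real.norm_eq_abs, abs_of_nonneg (by positivity)]
        _ ≤ 2 * c ^ 2 * Real.exp (-(2 * σ) * p) := this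
  -- The change of variables
  have key : (∫ p in Set.Ioi ((r : ℝ) + 1), (c * Real.exp (-σ * p)) ^ 2 * (2 / (2 * p + 1)))
      = c ^ 2 * Real.exp σ *
        ∫ t in Set.Ioi ((2 * (r : ℝ) + 3) * σ), Real.exp (-t) / t := by
    have hcongr : (∫ p in Set.Ioi ((r : ℝ) + 1), (c * Real.exp (-σ * p)) ^ 2 * (2 / (2 * p + 1)))
        = ∫ p in Set.Ioi ((r : ℝ) + 1),
            (c ^ 2 * Real.exp σ * (2 * σ)) • (Real.exp (-(2 * σ * p + σ)) / (2 * σ * p + σ)) := by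
      refine setIntegral_congr_fun measurableSet_Ioi fun p hp => ?_
      have hp0 : (0 : ℝ) < p := lt_trans hr1 hp
      have hden : (0 : ℝ) < 2 * σ * p + σ := by positivity
      have h2p1 : (0 : ℝ) < 2 * p + 1 := by linarith
      have hexp : (c * Real.exp (-σ * p)) ^ 2 = c ^ 2 * Real.exp (-(2 * σ) * p) := by
        rw [mul_pow, ← Real.exp_nat_mul]; ring_nf
      have hexp2 : Real.exp (-(2 * σ * p + σ)) = Real.exp (-(2 * σ) * p) * Real.exp (-σ) := by
        rw [← Real.exp_add]; ring_nf
      have hσe : Real.exp σ * Real.exp (-σ) = 1 := by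
        rw [← Real.exp_add]; simp
      rw [smul_eq_mul, hexp, hexp2,
        show c ^ 2 * Real.exp σ * (2 * σ) *
            (Real.exp (-(2 * σ) * p) * Real.exp (-σ) / (2 * σ * p + σ)) =
          c ^ 2 * (Real.exp σ * Real.exp (-σ)) *
            (2 * σ * Real.exp (-(2 * σ) * p) / (2 * σ * p + σ)) from by ring, hσe]
      field_simp
    rw [hcongr, integral_smul]
    set g : ℝ → ℝ := fun t => Real.exp (-t) / t with hg
    have hG : (fun p : ℝ => Real.exp (-(2 * σ * p + σ)) / (2 * σ * p + σ))
        = fun p : ℝ => (fun x => g (x + σ)) (2 * σ * p) := by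
      funext p; simp [hg]
    rw [hG, MeasureTheory.integral_comp_mul_left_Ioi (fun x => g (x + σ)) _ (by positivity : (0:ℝ) < 2 * σ),
      integral_comp_add_right_Ioi' g _ σ]
    have harg : 2 * σ * ((r : ℝ) + 1) + σ = (2 * (r : ℝ) + 3) * σ := by ring
    rw [harg]
    rw [smul_eq_mul, smul_eq_mul]
    field_simp
  refine ⟨hint, key, fun a_r => by rw [key]⟩
end

section
/- Let n ≥ 1. Define on ℝ[x₁, …, xₙ] the barycentric coordinate polynomials λ₀ = 1 − (x₁ + … + xₙ) and λ_j = x_j for 1 ≤ j ≤ n, the operators D_{ij} = ∂/∂x_j − ∂/∂x_i for 0 ≤ i < j ≤ n (with ∂/∂x₀ = 0), and the Braess–Schwab operator 𝓛u = −Σ_{0 ≤ i < j ≤ n} D_{ij}( λ_i λ_j D_{ij} u ). Then for every p ∈ ℕ there exists a nonzero polynomial u ∈ ℝ[x₁, …, xₙ] of total degree exactly p satisfying the eigenvalue equation 𝓛u = p(p+n)·u. In particular p(p+n) is an eigenvalue of 𝓛 for every p. -/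
open MvPolynomial

/-- Formal partial derivatives `∂/∂x_i` on `ℝ[x₁,…,xₙ]`, indexed by
`i ∈ {0,…,n}` with the convention `∂/∂x₀ = 0`. -/
noncomputable def pd (n : ℕ) : Fin (n + 1) → (MvPolynomial (Fin n) ℝ →ₗ[ℝ] MvPolynomial (Fin n) ℝ) :=
  Fin.cases 0 (fun j => (pderiv j).toLinearMap)

/-- The edge operator `D_{ij} = ∂/∂x_j − ∂/∂x_i` (with `∂/∂x₀ = 0`). -/
noncomputable def Dop (n : ℕ) (i j : Fin (n + 1)) :
    MvPolynomial (Fin n) ℝ →ₗ[ℝ] MvPolynomial (Fin n) ℝ :=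
  pd n j - pd n i

/-- The barycentric coordinate polynomials of the reference `n`-simplex:
`λ₀ = 1 − (x₁ + … + xₙ)` and `λ_j = x_j` for `1 ≤ j ≤ n`. -/
noncomputable def lam (n : ℕ) : Fin (n + 1) → MvPolynomial (Fin n) ℝ :=
  Fin.cases (1 - ∑ j : Fin n, X j) (fun j => X j)

/-- The Braess–Schwab operator
`𝓛 u = −Σ_{0 ≤ i < j ≤ n} D_{ij}( λ_i λ_j D_{ij} u )`. -/
noncomputable def braessSchwab (n : ℕ) :
    MvPolynomial (Fin n) ℝ →ₗ[ℝ] MvPolynomial (Fin n) ℝ :=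
  - ∑ i : Fin (n + 1), ∑ j : Fin (n + 1),
      if i < j then
        (Dop n i j) ∘ₗ (LinearMap.mulLeft ℝ (lam n i * lam n j)) ∘ₗ (Dop n i j)
      else 0

@[simp] lemma pd_zero (n : ℕ) : pd n 0 = 0 := rfl
@[simp] lemma pd_succ (n : ℕ) (j : Fin n) : pd n j.succ = (pderiv j).toLinearMap := by
  simp [pd]
@[simp] lemma lam_zero (n : ℕ) : lam n 0 = 1 - ∑ j : Fin n, X j := rfl
@[simp] lemma lam_succ (n : ℕ) (j : Fin n) : lam n j.succ = X j := by
  simp [lam]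

lemma pderiv_sumX (n : ℕ) (i : Fin n) :
    pderiv i (∑ j : Fin n, X j : MvPolynomial (Fin n) ℝ) = 1 := by
  classical
  rw [map_sum]
  rw [Finset.sum_eq_single i (fun b _ hb => pderiv_X_of_ne hb) (by simp)]
  exact pderiv_X_self i

lemma braessSchwab_apply (n : ℕ) (u : MvPolynomial (Fin n) ℝ) :
    braessSchwab n u =
      - ∑ i : Fin (n + 1), ∑ j : Fin (n + 1),
        (if i < j then Dop n i j (lam n i * lam n j * Dop n i j u) else 0) := by
  simp only [braessSchwab, LinearMap.neg_apply, LinearMap.sum_apply]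
  congr 1
  refine Finset.sum_congr rfl fun i _ => Finset.sum_congr rfl fun j _ => ?_
  split
  · simp [LinearMap.mulLeft_apply, mul_assoc]
  · rfl


lemma pderiv_natCast (n : ℕ) (i : Fin n) (m : ℕ) :
    pderiv i ((m : MvPolynomial (Fin n) ℝ)) = 0 := by
  rw [← map_natCast (C : ℝ →+* MvPolynomial (Fin n) ℝ)]; exact pderiv_C

lemma pderiv_ofNat (n : ℕ) (i : Fin n) (m : ℕ) [m.AtLeastTwo] :
    pderiv i (OfNat.ofNat m : MvPolynomial (Fin n) ℝ) = 0 := by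
  rw [← Nat.cast_ofNat]; exact pderiv_natCast n i m

lemma compute0 (n : ℕ) (hn : 0 < n) (k : ℕ) :
    pderiv ⟨0,hn⟩ ((1 - ∑ j : Fin n, X j) * X ⟨0,hn⟩ * pderiv ⟨0,hn⟩ (X ⟨0,hn⟩ ^ (k+1)) : MvPolynomial (Fin n) ℝ)
     = (((k+1)*(k+1) : ℕ) : MvPolynomial (Fin n) ℝ) * ((1 - ∑ j : Fin n, X j) * X ⟨0,hn⟩ ^ k)
       - (((k+1) : ℕ) : MvPolynomial (Fin n) ℝ) * X ⟨0,hn⟩ ^ (k+1) := by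
  cases k with
  | zero => simp [pderiv_mul, pderiv_sumX]; ring
  | succ m =>
    simp only [pderiv_mul, pderiv_pow, pderiv_one, pderiv_sumX, pderiv_X_self,
      Nat.add_sub_cancel, map_sub, map_one, mul_one, Nat.cast_ofNat, pderiv_natCast]
    push_cast
    ring

lemma compute1 (n : ℕ) (hn : 0 < n) (k : ℕ) (j' : Fin n) (hj : j' ≠ ⟨0,hn⟩) :
    pderiv j' (X ⟨0,hn⟩ * X j' *
        (pderiv j' (X ⟨0,hn⟩ ^ (k+1)) - pderiv ⟨0,hn⟩ (X ⟨0,hn⟩ ^ (k+1))) : MvPolynomial (Fin n) ℝ)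
      - pderiv ⟨0,hn⟩ (X ⟨0,hn⟩ * X j' *
        (pderiv j' (X ⟨0,hn⟩ ^ (k+1)) - pderiv ⟨0,hn⟩ (X ⟨0,hn⟩ ^ (k+1))))
     = (((k+1)*(k+1) : ℕ) : MvPolynomial (Fin n) ℝ) * (X ⟨0,hn⟩ ^ k * X j')
       - (((k+1) : ℕ) : MvPolynomial (Fin n) ℝ) * X ⟨0,hn⟩ ^ (k+1) := by
  have h1 : pderiv j' (X (⟨0,hn⟩ : Fin n) : MvPolynomial (Fin n) ℝ) = 0 :=
    pderiv_X_of_ne (Ne.symm hj)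
  have h2 : pderiv (⟨0,hn⟩ : Fin n) (X j' : MvPolynomial (Fin n) ℝ) = 0 :=
    pderiv_X_of_ne hj
  cases k with
  | zero => simp [pderiv_mul, h1, h2]; ring
  | succ m =>
    simp only [pderiv_mul, pderiv_pow, pderiv_one, pderiv_X_self, h1, h2,
      Nat.add_sub_cancel, map_sub, map_one, mul_one, pderiv_natCast, mul_zero, zero_mul,
      sub_zero, zero_sub, add_zero, zero_add, map_neg, pderiv_ofNat]
    push_cast
    ring

lemma key (n : ℕ) (hn : 0 < n) (k : ℕ) :
    braessSchwab n (X (⟨0, hn⟩ : Fin n) ^ (k+1)) =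
      (((k+1)*(k+1+n) : ℕ) : MvPolynomial (Fin n) ℝ) * X (⟨0,hn⟩ : Fin n) ^ (k+1)
      - (((k+1)*(k+1) : ℕ) : MvPolynomial (Fin n) ℝ) * X (⟨0,hn⟩ : Fin n) ^ k := by
  classical
  set e : Fin n := ⟨0, hn⟩ with he
  set u : MvPolynomial (Fin n) ℝ := X e ^ (k+1) with hu
  set s : MvPolynomial (Fin n) ℝ := ∑ j : Fin n, X j with hs
  set A : MvPolynomial (Fin n) ℝ :=
    (((k+1)*(k+1) : ℕ) : MvPolynomial (Fin n) ℝ) * ((1 - s) * X e ^ k)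
      - (((k+1) : ℕ) : MvPolynomial (Fin n) ℝ) * X e ^ (k+1) with hA
  set F : Fin n → MvPolynomial (Fin n) ℝ := fun j' =>
    (((k+1)*(k+1) : ℕ) : MvPolynomial (Fin n) ℝ) * (X e ^ k * X j')
      - (((k+1) : ℕ) : MvPolynomial (Fin n) ℝ) * X e ^ (k+1) with hF
  have hde : pderiv e u = ((k+1 : ℕ) : MvPolynomial (Fin n) ℝ) * X e ^ k := by
    rw [hu, pderiv_pow, Nat.add_sub_cancel, pderiv_X_self, mul_one]
  have hdo : ∀ j' : Fin n, j' ≠ e → pderiv j' u = 0 := by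
    intro j' hj
    rw [hu, pderiv_pow, pderiv_X_of_ne (Ne.symm hj), mul_zero]
  rw [braessSchwab_apply, Fin.sum_univ_succ]
  -- row i = 0
  have row0 : ∑ jj : Fin (n+1),
      (if (0:Fin (n+1)) < jj then Dop n 0 jj (lam n 0 * lam n jj * Dop n 0 jj u) else 0) = A := by
    have hpt : ∀ jj : Fin (n+1),
        (if (0:Fin (n+1)) < jj then Dop n 0 jj (lam n 0 * lam n jj * Dop n 0 jj u) else 0)
          = (if jj = e.succ then A else 0) := by
      intro jj
      induction jj using Fin.cases with
      | zero => simp [(Fin.succ_ne_zero e).symm]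
      | succ j' =>
        rw [if_pos (Fin.succ_pos j')]
        by_cases hj : j' = e
        · subst hj
          rw [if_pos rfl, hA]
          simp only [Dop, pd_zero, pd_succ, LinearMap.sub_apply, LinearMap.zero_apply,
            sub_zero, LinearMap.coe_mk, Derivation.coeFn_coe, lam_zero, lam_succ]
          rw [hu, hs]
          exact compute0 n hn k
        · rw [if_neg (fun h => hj (Fin.succ_injective n h))]
          simp only [Dop, pd_zero, pd_succ, LinearMap.sub_apply, LinearMap.zero_apply,
            sub_zero, Derivation.coeFn_coe]
          rw [hdo j' hj, mul_zero, map_zero]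
    rw [Finset.sum_congr rfl (fun jj _ => hpt jj), Finset.sum_ite_eq' Finset.univ e.succ]
    simp
  rw [row0]
  -- rows i = i'.succ
  have rowb : ∑ jj : Fin (n+1),
      (if e.succ < jj then Dop n e.succ jj (lam n e.succ * lam n jj * Dop n e.succ jj u) else 0)
      = (∑ j' : Fin n, F j') - F e := by
    have hpt2 : ∀ jj : Fin (n+1),
        (if e.succ < jj then Dop n e.succ jj (lam n e.succ * lam n jj * Dop n e.succ jj u) else 0)
        = (Fin.cases 0 (fun j' => F j' - (if j' = e then F j' else 0)) jj) := by
      intro jj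
      induction jj using Fin.cases with
      | zero => simp [Fin.not_lt_zero]
      | succ j' =>
        by_cases hj : j' = e
        · rw [hj]
          simp [lt_irrefl]
        · have hlt : e.succ < j'.succ := by
            rw [Fin.succ_lt_succ_iff]
            exact lt_of_le_of_ne (by simp [he, Fin.le_def]) (fun h => hj (h.symm))
          rw [if_pos hlt]
          simp only [Fin.cases_succ, if_neg hj, sub_zero]
          simp only [Dop, pd_succ, LinearMap.sub_apply, Derivation.coeFn_coe, lam_succ]
          simp only [hF, hu]
          exact compute1 n hn k j' hj
    rw [Finset.sum_congr rfl (fun jj _ => hpt2 jj), Fin.sum_univ_succ]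
    simp only [Fin.cases_zero, Fin.cases_succ, zero_add]
    rw [Finset.sum_sub_distrib, Finset.sum_ite_eq' Finset.univ e F]
    simp
  have rows : ∑ i' : Fin n, ∑ jj : Fin (n+1),
      (if i'.succ < jj then Dop n i'.succ jj (lam n i'.succ * lam n jj * Dop n i'.succ jj u) else 0)
      = (∑ j' : Fin n, F j') - F e := by
    have hpt : ∀ i' : Fin n, (∑ jj : Fin (n+1),
        (if i'.succ < jj then Dop n i'.succ jj (lam n i'.succ * lam n jj * Dop n i'.succ jj u) else 0))
        = (if i' = e then (∑ j' : Fin n, F j') - F e else 0) := by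
      intro i'
      by_cases hi : i' = e
      · rw [if_pos hi, hi]
        exact rowb
      · rw [if_neg hi]
        refine Finset.sum_eq_zero fun jj _ => ?_
        induction jj using Fin.cases with
        | zero => simp
        | succ j' =>
          by_cases hlt : i'.succ < j'.succ
          · rw [if_pos hlt]
            have hj' : j' ≠ e := by
              intro hje
              have h2 : (i' : ℕ) < (j' : ℕ) := Fin.succ_lt_succ_iff.mp hlt
              rw [hje] at h2
              exact Nat.not_lt_zero _ h2
            simp only [Dop, pd_succ, LinearMap.sub_apply, Derivation.coeFn_coe]
            rw [hdo j' hj', hdo i' hi, sub_zero, mul_zero, map_zero, map_zero, sub_zero]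
          · rw [if_neg hlt]
    rw [Finset.sum_congr rfl (fun i' _ => hpt i'), Finset.sum_ite_eq' Finset.univ e]
    simp
  rw [rows]
  -- final algebra
  have hsumF : ∑ j' : Fin n, F j' =
      (((k+1)*(k+1) : ℕ) : MvPolynomial (Fin n) ℝ) * (X e ^ k * s)
        - (n : MvPolynomial (Fin n) ℝ) * ((((k+1) : ℕ) : MvPolynomial (Fin n) ℝ) * X e ^ (k+1)) := by
    rw [hF, Finset.sum_sub_distrib, ← Finset.mul_sum, ← Finset.mul_sum, hs,
      Finset.sum_const, Finset.card_univ, Fintype.card_fin, nsmul_eq_mul]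
  have hFe : F e = (((k+1)*(k+1) : ℕ) : MvPolynomial (Fin n) ℝ) * X e ^ (k+1)
      - (((k+1) : ℕ) : MvPolynomial (Fin n) ℝ) * X e ^ (k+1) := by
    simp only [hF]
    rw [mul_comm (X e ^ k) (X e), ← pow_succ']
  rw [hsumF, hFe, hA, hu]
  push_cast
  ring

lemma pd_one (n : ℕ) (j : Fin (n+1)) : pd n j (1 : MvPolynomial (Fin n) ℝ) = 0 := by
  induction j using Fin.cases with
  | zero => rfl
  | succ j' => simp [pderiv_one]

lemma key0 (n : ℕ) : braessSchwab n (1 : MvPolynomial (Fin n) ℝ) = 0 := by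
  rw [braessSchwab_apply]
  have : ∀ i j : Fin (n+1), Dop n i j (1 : MvPolynomial (Fin n) ℝ) = 0 := by
    intro i j
    simp [Dop, pd_one]
  simp [this]

lemma keyAll (n : ℕ) (hn : 0 < n) (k : ℕ) :
    braessSchwab n (X (⟨0, hn⟩ : Fin n) ^ k) =
      ((k*(k+n) : ℕ) : MvPolynomial (Fin n) ℝ) * X (⟨0,hn⟩ : Fin n) ^ k
      - ((k*k : ℕ) : MvPolynomial (Fin n) ℝ) * X (⟨0,hn⟩ : Fin n) ^ (k-1) := by
  cases k with
  | zero => simpa using key0 n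
  | succ m => simpa using key n hn m

noncomputable def coefC (n p : ℕ) : ℕ → ℝ
  | 0 => 1
  | (k+1) => coefC n p k * (((k:ℝ) - p) * ((k:ℝ) + n + p)) / ((k:ℝ)+1)^2

lemma coefC_ne_zero (n p : ℕ) (hn : 0 < n) : ∀ k, k ≤ p → coefC n p k ≠ 0 := by
  intro k
  induction k with
  | zero => intro _; simp [coefC]
  | succ m ih =>
    intro hm
    have hm' : m < p := hm
    rw [coefC]
    apply div_ne_zero
    · apply mul_ne_zero (ih hm'.le)
      apply mul_ne_zero
      · have : (m:ℝ) < p := by exact_mod_cast hm'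
        exact sub_ne_zero.mpr this.ne
      · positivity
    · positivity

lemma coefC_rec (n p k : ℕ) :
    ((k:ℝ)+1)^2 * coefC n p (k+1)
      = coefC n p k * ((k*(k+n) : ℝ) - (p*(p+n) : ℝ)) := by
  rw [coefC]
  have h2 : ((k:ℝ)+1)^2 ≠ 0 := by positivity
  rw [mul_comm, div_mul_cancel₀ _ h2]
  ring

lemma natmul_smul (n m : ℕ) (q : MvPolynomial (Fin n) ℝ) :
    ((m : ℕ) : MvPolynomial (Fin n) ℝ) * q = (m : ℝ) • q := by
  rw [smul_eq_C_mul, map_natCast (C : ℝ →+* MvPolynomial (Fin n) ℝ)]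

/-- For every `p ∈ ℕ` there is a nonzero polynomial of total degree exactly `p`
that is an eigenfunction of the Braess–Schwab operator for the eigenvalue
`p(p+n)`; in particular `p(p+n)` is an eigenvalue of `𝓛` for every `p`. -/
theorem braessSchwab_eigenvalue_exists
    (n : ℕ) (hn : 1 ≤ n) (p : ℕ) :
    ∃ u : MvPolynomial (Fin n) ℝ, u ≠ 0 ∧ u.totalDegree = p ∧
      braessSchwab n u = ((p * (p + n) : ℕ) : ℝ) • u := by
  classical
  have hn0 : 0 < n := hn
  set e : Fin n := ⟨0, hn0⟩ with he
  set c : ℕ → ℝ := coefC n p with hc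
  set u : MvPolynomial (Fin n) ℝ := ∑ k ∈ Finset.range (p+1), c k • X e ^ k with hu
  have hcp : c p ≠ 0 := coefC_ne_zero n p hn0 p le_rfl
  have hcoeff : coeff (Finsupp.single e p) u = c p := by
    rw [hu, coeff_sum]
    rw [Finset.sum_eq_single p ?h ?g]
    · rw [coeff_smul, X_pow_eq_monomial, coeff_monomial, if_pos rfl, smul_eq_mul, mul_one]
    case h =>
      intro b _ hb
      rw [coeff_smul, X_pow_eq_monomial, coeff_monomial, if_neg, smul_zero]
      exact fun h => hb (Finsupp.single_injective e h)
    case g => exact fun h => absurd (Finset.self_mem_range_succ p) h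
  refine ⟨u, ?_, ?_, ?_⟩
  · intro h0
    rw [h0, coeff_zero] at hcoeff
    exact hcp hcoeff.symm
  · apply le_antisymm
    · refine totalDegree_finsetSum_le fun k hk => ?_
      refine (totalDegree_smul_le _ _).trans ?_
      rw [totalDegree_X_pow]
      exact Nat.lt_succ_iff.mp (Finset.mem_range.mp hk)
    · have h : coeff (Finsupp.single e p) u ≠ 0 := by rw [hcoeff]; exact hcp
      have := le_totalDegree (mem_support_iff.mpr h)
      simpa using this
  · have hrec : ∀ k : ℕ, ((k:ℝ)+1)^2 * c (k+1) = c k * ((k*(k+n):ℝ) - (p*(p+n):ℝ)) := by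
      intro k
      rw [hc, coefC_rec, mul_sub]
    rw [hu, map_sum]
    have hkA : ∀ k : ℕ, braessSchwab n (X e ^ k) =
        ((k*(k+n) : ℕ) : MvPolynomial (Fin n) ℝ) * X e ^ k
        - ((k*k : ℕ) : MvPolynomial (Fin n) ℝ) * X e ^ (k-1) := keyAll n hn0
    simp_rw [map_smul, hkA, smul_sub]
    rw [Finset.sum_sub_distrib]
    have h1 : ∑ k ∈ Finset.range (p+1), c k • (((k*(k+n) : ℕ) : MvPolynomial (Fin n) ℝ) * X e ^ k)
        = ∑ k ∈ Finset.range (p+1), (c k * ((k*(k+n):ℝ))) • X e ^ k := by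
      refine Finset.sum_congr rfl fun k _ => ?_
      rw [natmul_smul, smul_smul]
      push_cast
      ring_nf
    have h2 : ∑ k ∈ Finset.range (p+1), c k • (((k*k : ℕ) : MvPolynomial (Fin n) ℝ) * X e ^ (k-1))
        = ∑ k ∈ Finset.range (p+1), (c k * ((k*(k+n):ℝ)) - c k * ((p*(p+n):ℝ))) • X e ^ k := by
      rw [Finset.sum_range_succ' (fun k => c k • (((k*k : ℕ) : MvPolynomial (Fin n) ℝ) * X e ^ (k-1)))]
      rw [Finset.sum_range_succ (fun k => (c k * ((k*(k+n):ℝ)) - c k * ((p*(p+n):ℝ))) • X e ^ k)]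
      have hz1 : c 0 • ((((0*0 : ℕ) : MvPolynomial (Fin n) ℝ) * X e ^ ((0:ℕ)-1) : MvPolynomial (Fin n) ℝ)) = (0 : MvPolynomial (Fin n) ℝ) := by
        rw [show ((0*0:ℕ) : MvPolynomial (Fin n) ℝ) = 0 by norm_num, zero_mul, smul_zero]
      have hz2 : (c p * ((p*(p+n):ℝ)) - c p * ((p*(p+n):ℝ))) • (X e ^ p : MvPolynomial (Fin n) ℝ) = 0 := by
        rw [sub_self, zero_smul]
      rw [hz1, hz2, add_zero, add_zero]
      refine Finset.sum_congr rfl fun k _ => ?_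
      rw [Nat.add_sub_cancel, natmul_smul, smul_smul]
      have hco : c (k+1) * (((k+1)*(k+1) : ℕ) : ℝ) = c k * ((k*(k+n):ℝ)) - c k * ((p*(p+n):ℝ)) := by
        rw [← mul_sub, ← hrec k]
        push_cast
        ring
      rw [hco]
    rw [h1, h2, ← Finset.sum_sub_distrib, Finset.smul_sum]
    refine Finset.sum_congr rfl fun k _ => ?_
    rw [← sub_smul, smul_smul]
    push_cast
    ring_nf
end

section
/- Let n ≥ 1 and r ∈ ℕ. Define on ℝ[x₁, …, xₙ] the barycentric coordinate polynomials λ₀ = 1 − (x₁ + … + xₙ) and λ_j = x_j for 1 ≤ j ≤ n, the operators D_{ij} = ∂/∂x_j − ∂/∂x_i for 0 ≤ i < j ≤ n (with ∂/∂x₀ = 0), and the Braess–Schwab operator 𝓛u = −Σ_{0 ≤ i < j ≤ n} D_{ij}( λ_i λ_j D_{ij} u ). Let P_r ⊆ ℝ[x₁, …, xₙ] be the subspace of polynomials of total degree ≤ r, and for 0 ≤ p ≤ r let Φ_p = { u ∈ P_r : 𝓛u = p(p+n)·u } be the eigenspace for the eigenvalue p(p+n). Then the eigenvalues p(p+n),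 p = 0, …, r, are pairwise distinct, the subspaces Φ₀, …, Φ_r are linearly independent, and P_r is their internal direct sum: P_r = Φ₀ ⊕ Φ₁ ⊕ … ⊕ Φ_r. -/
open MvPolynomial

noncomputable def Eop (n : ℕ) : MvPolynomial (Fin n) ℝ →ₗ[ℝ] MvPolynomial (Fin n) ℝ :=
  ∑ i : Fin n, (LinearMap.mulLeft ℝ (X i)) ∘ₗ (pderiv i).toLinearMap

noncomputable def Rop (n : ℕ) : MvPolynomial (Fin n) ℝ →ₗ[ℝ] MvPolynomial (Fin n) ℝ :=
  ∑ i : Fin n, (pderiv i).toLinearMap ∘ₗ (LinearMap.mulLeft ℝ (X i)) ∘ₗ (pderiv i).toLinearMap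

lemma Eop_apply (n : ℕ) (u : MvPolynomial (Fin n) ℝ) :
    Eop n u = ∑ i : Fin n, X i * pderiv i u := by
  simp [Eop, LinearMap.sum_apply]

lemma Rop_apply (n : ℕ) (u : MvPolynomial (Fin n) ℝ) :
    Rop n u = ∑ i : Fin n, pderiv i (X i * pderiv i u) := by
  simp [Rop, LinearMap.sum_apply]

lemma pd_zero_apply (n : ℕ) (v : MvPolynomial (Fin n) ℝ) : pd n 0 v = 0 := by
  simp [pd]

lemma pd_succ_apply (n : ℕ) (j : Fin n) (v : MvPolynomial (Fin n) ℝ) :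
    pd n j.succ v = pderiv j v := by
  simp [pd]

lemma half_cancel {n : ℕ} {x y : MvPolynomial (Fin n) ℝ} (h : 2 • x = 2 • y) : x = y := by
  have h2 : (2 : ℝ) • x = (2 : ℝ) • y := by
    have := h
    rw [show ((2:ℕ) • x) = ((2:ℕ):ℝ) • x from (Nat.cast_smul_eq_nsmul ℝ 2 x).symm,
        show ((2:ℕ) • y) = ((2:ℕ):ℝ) • y from (Nat.cast_smul_eq_nsmul ℝ 2 y).symm] at this
    simpa using this
  have := congrArg (fun z => (2:ℝ)⁻¹ • z) h2
  simpa [smul_smul] using this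

lemma braessSchwab_eq (n : ℕ) :
    braessSchwab n = (Eop n ∘ₗ Eop n + n • Eop n) - Rop n := by
  apply LinearMap.ext
  intro u
  set P : Fin (n+1) → Fin (n+1) → MvPolynomial (Fin n) ℝ :=
    fun i j => Dop n i j ((lam n i * lam n j) * Dop n i j u) with hP
  have step1 : braessSchwab n u
      = -∑ i : Fin (n+1), ∑ j : Fin (n+1), (if i < j then P i j else 0) := by
    rw [braessSchwab, LinearMap.neg_apply, LinearMap.sum_apply]
    congr 1
    apply Finset.sum_congr rfl; intro i _
    rw [LinearMap.sum_apply]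
    apply Finset.sum_congr rfl; intro j _
    split_ifs with h
    · simp [hP, LinearMap.comp_apply, LinearMap.mulLeft_apply, mul_assoc]
    · rfl
  have hdiag : ∀ i, P i i = 0 := by
    intro i
    have : Dop n i i = 0 := sub_self _
    simp [hP, this]
  have hsymm : ∀ i j, P j i = P i j := by
    intro i j
    have hD : Dop n j i = -Dop n i j := by rw [Dop, Dop, neg_sub]
    simp only [hP, hD, LinearMap.neg_apply, mul_neg, map_neg, neg_neg,
      mul_comm (lam n j) (lam n i)]
  have hdouble : ∑ i : Fin (n+1), ∑ j : Fin (n+1), P i j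
      = 2 • ∑ i : Fin (n+1), ∑ j : Fin (n+1), (if i < j then P i j else 0) := by
    have tri : ∀ i j : Fin (n+1), P i j
        = (if i < j then P i j else 0) + (if j < i then P i j else 0) := by
      intro i j
      rcases lt_trichotomy i j with h | h | h
      · simp [h, asymm h]
      · subst h; simp [lt_irrefl, hdiag]
      · simp [h, asymm h]
    calc ∑ i : Fin (n+1), ∑ j : Fin (n+1), P i j
        = ∑ i : Fin (n+1), ∑ j : Fin (n+1),
            ((if i < j then P i j else 0) + (if j < i then P i j else 0)) := by
          exact Finset.sum_congr rfl fun i _ => Finset.sum_congr rfl fun j _ => tri i j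
      _ = (∑ i : Fin (n+1), ∑ j : Fin (n+1), (if i < j then P i j else 0))
          + ∑ i : Fin (n+1), ∑ j : Fin (n+1), (if j < i then P i j else 0) := by
          simp [Finset.sum_add_distrib]
      _ = (∑ i : Fin (n+1), ∑ j : Fin (n+1), (if i < j then P i j else 0))
          + ∑ i : Fin (n+1), ∑ j : Fin (n+1), (if i < j then P i j else 0) := by
          congr 1
          rw [Finset.sum_comm]
          exact Finset.sum_congr rfl fun i _ => Finset.sum_congr rfl fun j _ => by
            rcases lt_or_ge i j with h | h
            · simp [h, hsymm]
            · simp [not_lt.mpr h]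
      _ = 2 • ∑ i : Fin (n+1), ∑ j : Fin (n+1), (if i < j then P i j else 0) := by
          rw [two_smul]
  have hsplit : ∑ i : Fin (n+1), ∑ j : Fin (n+1), P i j
      = 2 • (∑ j : Fin n, P 0 j.succ) + ∑ i : Fin n, ∑ j : Fin n, P i.succ j.succ := by
    rw [Fin.sum_univ_succ]
    simp_rw [Fin.sum_univ_succ (f := fun j => P _ j)]
    rw [hdiag 0]
    rw [Finset.sum_add_distrib]
    have : ∑ i : Fin n, P i.succ 0 = ∑ j : Fin n, P 0 j.succ :=
      Finset.sum_congr rfl fun i _ => hsymm 0 i.succ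
    rw [this, two_smul]
    abel
  have hD0 : ∀ (j : Fin n) (v : MvPolynomial (Fin n) ℝ), Dop n 0 j.succ v = pderiv j v := by
    intro j v
    rw [Dop, LinearMap.sub_apply, pd_zero_apply, pd_succ_apply, sub_zero]
  have hDs : ∀ (i j : Fin n) (v : MvPolynomial (Fin n) ℝ),
      Dop n i.succ j.succ v = pderiv j v - pderiv i v := by
    intro i j v
    rw [Dop, LinearMap.sub_apply, pd_succ_apply, pd_succ_apply]
  have hlam0 : lam n 0 = 1 - ∑ k : Fin n, X k := by simp [lam]
  have hlams : ∀ j : Fin n, lam n j.succ = X j := fun j => by simp [lam]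
  set W := ∑ j : Fin n, ∑ k : Fin n, pderiv j (X k * (X j * pderiv j u)) with hW
  set T := ∑ i : Fin n, ∑ j : Fin n, pderiv i ((X i * X j) * pderiv j u) with hT0
  have hPz : ∑ j : Fin n, P 0 j.succ = Rop n u - W := by
    rw [Rop_apply, hW, ← Finset.sum_sub_distrib]
    apply Finset.sum_congr rfl; intro j _
    simp only [hP, hD0, hlam0, hlams]
    have e : ((1 - ∑ k : Fin n, X k) * X j) * pderiv j u
        = X j * pderiv j u - (∑ k : Fin n, X k) * (X j * pderiv j u) := by ring
    rw [e, Finset.sum_mul, map_sub, map_sum]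
  have hterm : ∀ i j : Fin n, P i.succ j.succ =
      (pderiv j ((X i * X j) * pderiv j u) - pderiv i ((X i * X j) * pderiv j u))
      - (pderiv j ((X i * X j) * pderiv i u) - pderiv i ((X i * X j) * pderiv i u)) := by
    intro i j
    simp only [hP, hDs, hlams]
    rw [mul_sub, map_sub, map_sub]
    abel
  have hS1 : ∑ i : Fin n, ∑ j : Fin n, pderiv j ((X i * X j) * pderiv j u) = W := by
    rw [Finset.sum_comm, hW]
    exact Finset.sum_congr rfl fun j _ => Finset.sum_congr rfl fun i _ => by rw [mul_assoc]
  have hS4 : ∑ i : Fin n, ∑ j : Fin n, pderiv i ((X i * X j) * pderiv i u) = W := by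
    rw [hW]
    exact Finset.sum_congr rfl fun i _ => Finset.sum_congr rfl fun j _ => by
      rw [show (X i * X j) * pderiv i u = X j * (X i * pderiv i u) by ring]
  have hS2 : ∑ i : Fin n, ∑ j : Fin n, pderiv j ((X i * X j) * pderiv i u) = T := by
    rw [Finset.sum_comm, hT0]
    exact Finset.sum_congr rfl fun j _ => Finset.sum_congr rfl fun i _ => by
      rw [mul_comm (X i) (X j)]
  have hPs : ∑ i : Fin n, ∑ j : Fin n, P i.succ j.succ = 2 • W - 2 • T := by
    calc ∑ i : Fin n, ∑ j : Fin n, P i.succ j.succ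
        = ∑ i : Fin n, ∑ j : Fin n,
            ((pderiv j ((X i * X j) * pderiv j u) - pderiv i ((X i * X j) * pderiv j u))
            - (pderiv j ((X i * X j) * pderiv i u) - pderiv i ((X i * X j) * pderiv i u))) :=
          Finset.sum_congr rfl fun i _ => Finset.sum_congr rfl fun j _ => hterm i j
      _ = ((∑ i : Fin n, ∑ j : Fin n, pderiv j ((X i * X j) * pderiv j u))
            - (∑ i : Fin n, ∑ j : Fin n, pderiv i ((X i * X j) * pderiv j u)))
          - ((∑ i : Fin n, ∑ j : Fin n, pderiv j ((X i * X j) * pderiv i u))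
            - (∑ i : Fin n, ∑ j : Fin n, pderiv i ((X i * X j) * pderiv i u))) := by
          simp only [Finset.sum_sub_distrib]
      _ = (W - T) - (T - W) := by rw [hS1, hS2, hS4, ← hT0]
      _ = 2 • W - 2 • T := by
          rw [two_smul, two_smul]; abel
  have hT : T = Eop n (Eop n u) + n • Eop n u := by
    calc T = ∑ i : Fin n, pderiv i (X i * ∑ j : Fin n, X j * pderiv j u) := by
          rw [hT0]
          refine Finset.sum_congr rfl fun i _ => ?_
          rw [Finset.mul_sum, map_sum]
          exact Finset.sum_congr rfl fun j _ => by rw [mul_assoc]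
      _ = ∑ i : Fin n, (Eop n u + X i * pderiv i (Eop n u)) := by
          refine Finset.sum_congr rfl fun i _ => ?_
          rw [← Eop_apply, pderiv_mul, pderiv_X_self, one_mul]
      _ = Eop n (Eop n u) + n • Eop n u := by
          rw [Finset.sum_add_distrib, Finset.sum_const, Finset.card_univ, Fintype.card_fin,
            Eop_apply n (Eop n u)]
          rw [add_comm]
  have hRHS : ((Eop n ∘ₗ Eop n + n • Eop n) - Rop n) u
      = (Eop n (Eop n u) + n • Eop n u) - Rop n u := by
    simp [LinearMap.sub_apply, LinearMap.add_apply, LinearMap.comp_apply, LinearMap.smul_apply]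
  apply half_cancel
  rw [hRHS, step1, smul_neg, ← hdouble, hsplit, hPz, hPs, ← hT]
  abel

lemma deg_pderiv {n : ℕ} (i : Fin n) (w : MvPolynomial (Fin n) ℝ) (c : ℕ)
    (h : w.totalDegree ≤ c + 1) : (pderiv i w).totalDegree ≤ c := by
  conv_lhs => rw [w.as_sum]
  rw [map_sum]
  apply totalDegree_finsetSum_le
  intro s hs
  rw [pderiv_monomial]
  by_cases h0 : s i = 0
  · simp [h0]
  · refine le_trans (totalDegree_monomial_le _ _) ?_
    show ((s - Finsupp.single i 1).sum fun _ e => e) ≤ c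
    have hlt : ((s - Finsupp.single i 1).sum fun _ e => e) < s.sum fun _ e => e := by
      rw [Finsupp.sum_fintype _ _ (fun _ => rfl), Finsupp.sum_fintype _ _ (fun _ => rfl)]
      refine Finset.sum_lt_sum (fun j _ => ?_) ⟨i, Finset.mem_univ i, ?_⟩
      · rw [Finsupp.tsub_apply]; exact Nat.sub_le _ _
      · rw [Finsupp.tsub_apply, Finsupp.single_eq_same]; omega
    have := (le_totalDegree hs).trans h
    omega

lemma Eop_monomial {n : ℕ} (s : Fin n →₀ ℕ) (a : ℝ) :
    Eop n (monomial s a) = (s.sum fun _ e => e) • monomial s a := by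
  rw [Eop_apply]
  have hterm : ∀ i : Fin n, X i * pderiv i (monomial s a) = (s i) • monomial s a := by
    intro i
    rw [pderiv_monomial]
    by_cases h0 : s i = 0
    · simp [h0]
    · have hft : (Finsupp.single i 1) + (s - Finsupp.single i 1) = s := by
        refine add_tsub_cancel_of_le ?_
        rw [Finsupp.single_le_iff]
        omega
      rw [X, monomial_mul, hft, one_mul, smul_monomial, nsmul_eq_mul, mul_comm]
  rw [Finset.sum_congr rfl fun i _ => hterm i, ← Finset.sum_smul,
    Finsupp.sum_fintype _ _ (fun _ => rfl)]

lemma Qsub_deg {n : ℕ} (r : ℕ) (u : MvPolynomial (Fin n) ℝ) (h : u.totalDegree ≤ r + 1) :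
    ((Eop n (Eop n u) + n • Eop n u)
      - (((r+1)*((r+1)+n) : ℕ) : ℝ) • u).totalDegree ≤ r := by
  set μ : ℝ := (((r+1)*((r+1)+n) : ℕ) : ℝ) with hμ
  set Φ : MvPolynomial (Fin n) ℝ →ₗ[ℝ] MvPolynomial (Fin n) ℝ :=
    (Eop n ∘ₗ Eop n + n • Eop n) - μ • LinearMap.id with hΦ
  have happ : ∀ v, Φ v = (Eop n (Eop n v) + n • Eop n v) - μ • v := by
    intro v
    simp [hΦ, LinearMap.sub_apply, LinearMap.add_apply, LinearMap.comp_apply,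
      LinearMap.smul_apply]
  rw [← happ u]
  have hsum : Φ u = ∑ s ∈ u.support, Φ (monomial s (coeff s u)) := by
    conv_lhs => rw [u.as_sum]
    rw [map_sum]
  rw [hsum]
  apply totalDegree_finsetSum_le
  intro s hs
  have hd : (s.sum fun _ e => e) ≤ r + 1 := (le_totalDegree hs).trans h
  rw [happ, Eop_monomial, map_nsmul, Eop_monomial]
  set d := s.sum fun _ e => e with hdd
  have hcomb : d • (d • (monomial s (coeff s u))) + n • (d • monomial s (coeff s u))
      - μ • monomial s (coeff s u)
      = (((d:ℝ) * d + n * d) - μ) • monomial s (coeff s u) := by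
    rw [← Nat.cast_smul_eq_nsmul ℝ d (monomial s (coeff s u)),
      ← Nat.cast_smul_eq_nsmul ℝ d ((d:ℝ) • monomial s (coeff s u)),
      ← Nat.cast_smul_eq_nsmul ℝ n ((d:ℝ) • monomial s (coeff s u)),
      smul_smul, smul_smul, ← add_smul, ← sub_smul]
  rw [hcomb]
  rcases Nat.lt_or_ge d (r+1) with hlt | hge
  · refine le_trans (totalDegree_smul_le _ _) (le_trans (totalDegree_monomial_le _ _) ?_)
    show d ≤ r
    omega
  · have hdeq : d = r + 1 := le_antisymm hd hge
    have hz : (((d:ℝ) * d + n * d) - μ) = 0 := by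
      rw [hdeq, hμ]; push_cast; ring
    rw [hz, zero_smul]
    simp

lemma key_deg {n : ℕ} (r : ℕ) (u : MvPolynomial (Fin n) ℝ) (h : u.totalDegree ≤ r + 1) :
    (braessSchwab n u - (((r+1)*((r+1)+n) : ℕ) : ℝ) • u).totalDegree ≤ r := by
  have hb : braessSchwab n u - (((r+1)*((r+1)+n) : ℕ) : ℝ) • u
      = ((Eop n (Eop n u) + n • Eop n u) - (((r+1)*((r+1)+n) : ℕ) : ℝ) • u) - Rop n u := by
    rw [braessSchwab_eq, LinearMap.sub_apply, LinearMap.add_apply, LinearMap.comp_apply,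
      LinearMap.smul_apply]
    abel
  rw [hb]
  refine le_trans (totalDegree_sub _ _) (max_le (Qsub_deg r u h) ?_)
  rw [Rop_apply]
  apply totalDegree_finsetSum_le
  intro i _
  apply deg_pderiv
  refine le_trans (totalDegree_mul _ _) ?_
  have h1 : (X i : MvPolynomial (Fin n) ℝ).totalDegree = 1 := totalDegree_X i
  have h2 := deg_pderiv i u r h
  omega

lemma pderiv_eq_zero_deg0 {n : ℕ} (i : Fin n) (u : MvPolynomial (Fin n) ℝ)
    (h : u.totalDegree = 0) : pderiv i u = 0 := by
  conv_lhs => rw [u.as_sum]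
  rw [map_sum]
  apply Finset.sum_eq_zero
  intro s hs
  have h0 : (s.sum fun _ e => e) = 0 := by
    have := le_totalDegree hs
    omega
  have hsi : s i = 0 := by
    rw [Finsupp.sum_fintype _ _ (fun _ => rfl)] at h0
    have : s i ≤ ∑ j, s j := Finset.single_le_sum (fun j _ => Nat.zero_le _) (Finset.mem_univ i)
    omega
  rw [pderiv_monomial, hsi]
  simp

lemma braessSchwab_deg0 {n : ℕ} (u : MvPolynomial (Fin n) ℝ) (h : u.totalDegree = 0) :
    braessSchwab n u = 0 := by
  have hE : Eop n u = 0 := by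
    rw [Eop_apply]
    exact Finset.sum_eq_zero fun i _ => by rw [pderiv_eq_zero_deg0 i u h, mul_zero]
  have hR : Rop n u = 0 := by
    rw [Rop_apply]
    exact Finset.sum_eq_zero fun i _ => by rw [pderiv_eq_zero_deg0 i u h, mul_zero, map_zero]
  rw [braessSchwab_eq, LinearMap.sub_apply, LinearMap.add_apply, LinearMap.comp_apply,
    LinearMap.smul_apply, hE, hR, map_zero, smul_zero, add_zero, sub_zero]

lemma eig_indep {M : Type*} [AddCommGroup M] [Module ℝ M] (f : M →ₗ[ℝ] M) :
    ∀ (m : ℕ) (c : Fin m → M) (μ : Fin m → ℝ), (∀ p q, p ≠ q → μ p ≠ μ q) →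
      (∀ p, f (c p) = μ p • c p) → ∑ p, c p = 0 → ∀ p, c p = 0 := by
  intro m
  induction m with
  | zero => intro c μ _ _ _ p; exact p.elim0
  | succ m ih =>
    intro c μ hμ hf hsum
    have h2 : ∑ q : Fin m, (μ q.castSucc - μ (Fin.last m)) • c q.castSucc = 0 := by
      have ha : ∑ p, μ p • c p = 0 := by
        have := congrArg f hsum
        rw [map_sum, map_zero] at this
        simpa [hf] using this
      have hb : ∑ p, μ (Fin.last m) • c p = 0 := by
        rw [← Finset.smul_sum, hsum, smul_zero]
      have hc : ∑ p, (μ p - μ (Fin.last m)) • c p = 0 := by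
        simp_rw [sub_smul]
        rw [Finset.sum_sub_distrib, ha, hb, sub_zero]
      rw [Fin.sum_univ_castSucc] at hc
      simpa using hc
    have h4 : ∀ q : Fin m, c q.castSucc = 0 := by
      have h3 := ih (fun q => (μ q.castSucc - μ (Fin.last m)) • c q.castSucc)
        (fun q => μ q.castSucc)
        (fun p q hpq => hμ _ _ (fun h => hpq (Fin.castSucc_injective m h)))
        (fun q => by rw [map_smul, hf, smul_comm]) h2
      intro q
      have hne : μ q.castSucc - μ (Fin.last m) ≠ 0 :=
        sub_ne_zero.mpr (hμ _ _ (Fin.castSucc_lt_last q).ne)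
      exact (smul_eq_zero.mp (h3 q)).resolve_left hne
    have h5 : c (Fin.last m) = 0 := by
      rw [Fin.sum_univ_castSucc] at hsum
      simpa [h4] using hsum
    intro p
    induction p using Fin.lastCases with
    | last => exact h5
    | cast q => exact h4 q

lemma mu_strictmono (n : ℕ) : ∀ a b : ℕ, a < b → a * (a + n) < b * (b + n) := by
  intro a b h
  have h1 : a * (a + n) < b * (a + n) + b := by
    have : a * (a + n) < b * (a + n) + b := by nlinarith
    exact this
  nlinarith

lemma exist_decomp (n : ℕ) (r : ℕ) :
    ∀ u : MvPolynomial (Fin n) ℝ, u.totalDegree ≤ r →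
      ∃ c : Fin (r + 1) → MvPolynomial (Fin n) ℝ,
        (∀ p, (c p).totalDegree ≤ r ∧
          braessSchwab n (c p) = (((p : ℕ) * ((p : ℕ) + n) : ℕ) : ℝ) • c p) ∧
        u = ∑ p, c p := by
  induction r with
  | zero =>
    intro u hu
    refine ⟨fun _ => u, fun p => ⟨hu, ?_⟩, by simp⟩
    have hp : (p : ℕ) = 0 := by omega
    rw [hp, braessSchwab_deg0 u (Nat.le_zero.mp hu)]
    simp
  | succ r ih =>
    intro u hu
    set μ : ℝ := ((((r:ℕ)+1) * (((r:ℕ)+1) + n) : ℕ) : ℝ) with hμ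
    set z := braessSchwab n u - μ • u with hz
    obtain ⟨d, hd, hdsum⟩ := ih z (key_deg r u hu)
    have hμq : ∀ q : Fin (r+1), (((q : ℕ) * ((q : ℕ) + n) : ℕ) : ℝ) - μ ≠ 0 := by
      intro q
      have hlt : (q : ℕ) * ((q : ℕ) + n) < (r+1) * ((r+1) + n) :=
        mu_strictmono n _ _ (by omega)
      have : ((((q : ℕ) * ((q : ℕ) + n) : ℕ) : ℝ)) < ((((r+1) * ((r+1) + n) : ℕ) : ℝ)) := by
        exact_mod_cast hlt
      rw [hμ]
      intro hcontr
      rw [sub_eq_zero] at hcontr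
      exact absurd hcontr (ne_of_lt this)
    set e : Fin (r+1) → MvPolynomial (Fin n) ℝ :=
      fun q => ((((q : ℕ) * ((q : ℕ) + n) : ℕ) : ℝ) - μ)⁻¹ • d q with he
    set c : Fin (r+2) → MvPolynomial (Fin n) ℝ :=
      Fin.lastCases (u - ∑ q : Fin (r+1), e q) e with hc
    have hclast : c (Fin.last (r+1)) = u - ∑ q : Fin (r+1), e q := by
      simp [hc]
    have hccast : ∀ q : Fin (r+1), c q.castSucc = e q := by
      intro q; simp [hc]
    have heig : ∀ q : Fin (r+1), braessSchwab n (e q)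
        = (((q : ℕ) * ((q : ℕ) + n) : ℕ) : ℝ) • e q := by
      intro q
      rw [he]
      simp only [map_smul, (hd q).2, smul_smul]
      rw [mul_comm]
    have hL : ∀ q : Fin (r+1), braessSchwab n (e q) - μ • e q = d q := by
      intro q
      rw [heig q, he]
      simp only [smul_smul]
      rw [← sub_smul, ← sub_mul, mul_inv_cancel₀ (hμq q), one_smul]
    have hsumc : u = ∑ p : Fin (r+2), c p := by
      rw [Fin.sum_univ_castSucc]
      simp only [hccast, hclast]
      abel
    refine ⟨c, ?_, hsumc⟩
    intro p
    induction p using Fin.lastCases with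
    | last =>
      constructor
      · rw [hclast]
        refine le_trans (totalDegree_sub _ _) (max_le hu ?_)
        refine totalDegree_finsetSum_le ?_
        intro q _
        rw [he]
        refine le_trans (totalDegree_smul_le _ _) (le_trans (hd q).1 ?_)
        omega
      · have hzero : braessSchwab n (c (Fin.last (r+1))) - μ • c (Fin.last (r+1)) = 0 := by
          rw [hclast, map_sub, map_sum, smul_sub, Finset.smul_sum]
          have : ∑ q : Fin (r+1), braessSchwab n (e q) - ∑ q : Fin (r+1), μ • e q
              = ∑ q : Fin (r+1), d q := by
            rw [← Finset.sum_sub_distrib]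
            exact Finset.sum_congr rfl fun q _ => hL q
          have hgoal : (braessSchwab n u - μ • u)
              - (∑ q : Fin (r+1), braessSchwab n (e q) - ∑ q : Fin (r+1), μ • e q) = 0 := by
            rw [this, ← hz, hdsum, sub_self]
          calc braessSchwab n u - ∑ q : Fin (r+1), braessSchwab n (e q)
              - (μ • u - ∑ q : Fin (r+1), μ • e q)
              = (braessSchwab n u - μ • u)
                - (∑ q : Fin (r+1), braessSchwab n (e q) - ∑ q : Fin (r+1), μ • e q) := by abel
            _ = 0 := hgoal
        have : braessSchwab n (c (Fin.last (r+1))) = μ • c (Fin.last (r+1)) :=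
          sub_eq_zero.mp hzero
        rw [this, hμ]
        norm_num
    | cast q =>
      constructor
      · rw [hccast, he]
        refine le_trans (totalDegree_smul_le _ _) (le_trans (hd q).1 ?_)
        omega
      · rw [hccast, heig q]
        norm_num


/-- Spectral decomposition of the polynomials of total degree at most `r` under
the Braess–Schwab operator: the eigenvalues `p(p+n)`, `p = 0,…,r`, are pairwise
distinct, the eigenspaces `Φ_p = {u ∈ P_r : 𝓛u = p(p+n)u}` are linearly
independent (a vanishing sum of eigenvectors has all summands zero), and every
polynomial of total degree at most `r` decomposes as a sum of elements of the
`Φ_p`; hence `P_r = Φ₀ ⊕ … ⊕ Φ_r` internally. -/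
theorem braessSchwab_spectral_decomposition
    (n : ℕ) (hn : 1 ≤ n) (r : ℕ) :
    (∀ p q : Fin (r + 1), p ≠ q →
      ((p : ℕ) * ((p : ℕ) + n) : ℕ) ≠ ((q : ℕ) * ((q : ℕ) + n) : ℕ)) ∧
    (∀ c : Fin (r + 1) → MvPolynomial (Fin n) ℝ,
      (∀ p, (c p).totalDegree ≤ r ∧
        braessSchwab n (c p) = (((p : ℕ) * ((p : ℕ) + n) : ℕ) : ℝ) • c p) →
      ∑ p, c p = 0 → ∀ p, c p = 0) ∧
    (∀ u : MvPolynomial (Fin n) ℝ, u.totalDegree ≤ r →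
      ∃ c : Fin (r + 1) → MvPolynomial (Fin n) ℝ,
        (∀ p, (c p).totalDegree ≤ r ∧
          braessSchwab n (c p) = (((p : ℕ) * ((p : ℕ) + n) : ℕ) : ℝ) • c p) ∧
        u = ∑ p, c p) := by
  have hdist : ∀ p q : Fin (r + 1), p ≠ q →
      ((p : ℕ) * ((p : ℕ) + n) : ℕ) ≠ ((q : ℕ) * ((q : ℕ) + n) : ℕ) := by
    intro p q hpq
    have hv : (p : ℕ) ≠ (q : ℕ) := fun h => hpq (Fin.ext h)
    rcases Nat.lt_or_ge (p : ℕ) (q : ℕ) with h | h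
    · exact Nat.ne_of_lt (mu_strictmono n _ _ h)
    · have : (q : ℕ) < (p : ℕ) := by omega
      exact (Nat.ne_of_lt (mu_strictmono n _ _ this)).symm
  refine ⟨hdist, ?_, exist_decomp n r⟩
  intro c hc hsum
  refine eig_indep (braessSchwab n) (r + 1) c
    (fun p => (((p : ℕ) * ((p : ℕ) + n) : ℕ) : ℝ)) ?_ (fun p => (hc p).2) hsum
  intro p q hpq h
  exact hdist p q hpq (Nat.cast_injective h)
end

section
/- Let n ≥ 1 and let p ∈ ℕ. Define on ℝ[x₁, …, xₙ] the barycentric coordinate polynomials λ₀ = 1 − (x₁ + … + xₙ) and λ_j = x_j for 1 ≤ j ≤ n, the operators D_{ij} = ∂/∂x_j − ∂/∂x_i for 0 ≤ i < j ≤ n (with ∂/∂x₀ = 0), and the Braess–Schwab operator 𝓛u = −Σ_{0 ≤ i < j ≤ n} D_{ij}( λ_i λ_j D_{ij} u ). Then the eigenspace Φ_p = { u ∈ ℝ[x₁, …, xₙ] : 𝓛u = p(p+n)·u } is finite dimensional, all of its elements have total degree ≤ p, and its dimension equals the binomial coefficient C(p+n−1, n−1), i.e., the number of monomials in n variables of total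 degree exactly p. -/
open MvPolynomial

namespace BSAux

open LinearMap

/-- The Euler operator `E = Σ_j x_j ∂_j`. -/
noncomputable def Eop (n : ℕ) : MvPolynomial (Fin n) ℝ →ₗ[ℝ] MvPolynomial (Fin n) ℝ :=
  ∑ j : Fin n, (LinearMap.mulLeft ℝ (X j)) ∘ₗ (pderiv j).toLinearMap

/-- The lower order operator `F = Σ_j ∂_j x_j ∂_j`. -/
noncomputable def Fop (n : ℕ) : MvPolynomial (Fin n) ℝ →ₗ[ℝ] MvPolynomial (Fin n) ℝ :=
  ∑ j : Fin n, (pderiv j).toLinearMap ∘ₗ (LinearMap.mulLeft ℝ (X j)) ∘ₗ (pderiv j).toLinearMap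

lemma lam_zero (n : ℕ) : lam n 0 = 1 - ∑ j : Fin n, X j := rfl

lemma lam_succ (n : ℕ) (j : Fin n) : lam n j.succ = X j := by
  simp [lam]

lemma pd_zero (n : ℕ) : pd n 0 = 0 := rfl

lemma pd_succ (n : ℕ) (j : Fin n) : pd n j.succ = (pderiv j).toLinearMap := by
  simp [pd]

lemma sum_lam (n : ℕ) : ∑ i : Fin (n + 1), lam n i = 1 := by
  rw [Fin.sum_univ_succ]
  simp only [lam_zero, lam_succ]
  ring

/-- The key operator identity `𝓛 = E² + nE - F`. -/
theorem braessSchwab_eq (n : ℕ) :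
    braessSchwab n = (Eop n) ∘ₗ (Eop n) + (n : ℝ) • Eop n - Fop n := by
  classical
  set G : Fin (n + 1) → Fin (n + 1) → (MvPolynomial (Fin n) ℝ →ₗ[ℝ] MvPolynomial (Fin n) ℝ) :=
    fun i j => (Dop n i j) ∘ₗ (LinearMap.mulLeft ℝ (lam n i * lam n j)) ∘ₗ (Dop n i j) with hGdef
  have Gdiag : ∀ i, G i i = 0 := by
    intro i
    simp [hGdef, Dop, sub_self, LinearMap.zero_comp]
  have Gsymm : ∀ i j, G i j = G j i := by
    intro i j
    simp only [hGdef, Dop]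
    have hA : pd n i - pd n j = -(pd n j - pd n i) := (neg_sub _ _).symm
    rw [mul_comm (lam n j) (lam n i), hA, LinearMap.comp_neg, LinearMap.comp_neg,
      LinearMap.neg_comp, neg_neg]
  set Q : MvPolynomial (Fin n) ℝ →ₗ[ℝ] MvPolynomial (Fin n) ℝ :=
    ∑ i : Fin (n + 1), pd n i ∘ₗ LinearMap.mulLeft ℝ (lam n i) with hQdef
  set R : MvPolynomial (Fin n) ℝ →ₗ[ℝ] MvPolynomial (Fin n) ℝ :=
    ∑ i : Fin (n + 1), LinearMap.mulLeft ℝ (lam n i) ∘ₗ pd n i with hRdef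
  set F2 : MvPolynomial (Fin n) ℝ →ₗ[ℝ] MvPolynomial (Fin n) ℝ :=
    ∑ i : Fin (n + 1), pd n i ∘ₗ LinearMap.mulLeft ℝ (lam n i) ∘ₗ pd n i with hF2def
  have e1 : ∑ i : Fin (n+1), ∑ j : Fin (n+1),
      (pd n j) ∘ₗ (LinearMap.mulLeft ℝ (lam n i * lam n j)) ∘ₗ (pd n j) = F2 := by
    rw [Finset.sum_comm, hF2def]
    refine Finset.sum_congr rfl fun j _ => ?_
    refine LinearMap.ext fun u => ?_
    simp only [LinearMap.sum_apply, LinearMap.comp_apply, LinearMap.mulLeft_apply]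
    rw [← map_sum]
    congr 1
    rw [← Finset.sum_mul, ← Finset.sum_mul, sum_lam, one_mul]
  have e4 : ∑ i : Fin (n+1), ∑ j : Fin (n+1),
      (pd n i) ∘ₗ (LinearMap.mulLeft ℝ (lam n i * lam n j)) ∘ₗ (pd n i) = F2 := by
    rw [hF2def]
    refine Finset.sum_congr rfl fun i _ => ?_
    refine LinearMap.ext fun u => ?_
    simp only [LinearMap.sum_apply, LinearMap.comp_apply, LinearMap.mulLeft_apply]
    rw [← map_sum]
    congr 1
    rw [← Finset.sum_mul, ← Finset.mul_sum, sum_lam, mul_one]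
  have e2 : ∑ i : Fin (n+1), ∑ j : Fin (n+1),
      (pd n j) ∘ₗ (LinearMap.mulLeft ℝ (lam n i * lam n j)) ∘ₗ (pd n i) = Q ∘ₗ R := by
    rw [hQdef, hRdef]
    refine LinearMap.ext fun u => ?_
    simp only [LinearMap.sum_apply, LinearMap.comp_apply, LinearMap.mulLeft_apply]
    rw [Finset.sum_comm]
    refine Finset.sum_congr rfl fun a _ => ?_
    rw [Finset.mul_sum, map_sum]
    refine Finset.sum_congr rfl fun b _ => ?_
    congr 1
    ring
  have e3 : ∑ i : Fin (n+1), ∑ j : Fin (n+1),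
      (pd n i) ∘ₗ (LinearMap.mulLeft ℝ (lam n i * lam n j)) ∘ₗ (pd n j) = Q ∘ₗ R := by
    rw [hQdef, hRdef]
    refine LinearMap.ext fun u => ?_
    simp only [LinearMap.sum_apply, LinearMap.comp_apply, LinearMap.mulLeft_apply]
    refine Finset.sum_congr rfl fun a _ => ?_
    rw [Finset.mul_sum, map_sum]
    refine Finset.sum_congr rfl fun b _ => ?_
    congr 1
    ring
  have hGexp : ∀ i j, G i j =
      ((pd n j) ∘ₗ (LinearMap.mulLeft ℝ (lam n i * lam n j)) ∘ₗ (pd n j)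
       - (pd n j) ∘ₗ (LinearMap.mulLeft ℝ (lam n i * lam n j)) ∘ₗ (pd n i))
      - ((pd n i) ∘ₗ (LinearMap.mulLeft ℝ (lam n i * lam n j)) ∘ₗ (pd n j)
       - (pd n i) ∘ₗ (LinearMap.mulLeft ℝ (lam n i * lam n j)) ∘ₗ (pd n i)) := by
    intro i j
    simp only [hGdef, Dop, LinearMap.sub_comp, LinearMap.comp_sub]
    abel
  have hsumG : ∑ i : Fin (n+1), ∑ j : Fin (n+1), G i j = (F2 - Q ∘ₗ R) + (F2 - Q ∘ₗ R) := by
    calc ∑ i : Fin (n+1), ∑ j : Fin (n+1), G i j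
        = ∑ i : Fin (n+1), ∑ j : Fin (n+1),
            (((pd n j) ∘ₗ (LinearMap.mulLeft ℝ (lam n i * lam n j)) ∘ₗ (pd n j)
             - (pd n j) ∘ₗ (LinearMap.mulLeft ℝ (lam n i * lam n j)) ∘ₗ (pd n i))
            - ((pd n i) ∘ₗ (LinearMap.mulLeft ℝ (lam n i * lam n j)) ∘ₗ (pd n j)
             - (pd n i) ∘ₗ (LinearMap.mulLeft ℝ (lam n i * lam n j)) ∘ₗ (pd n i))) :=
          Finset.sum_congr rfl fun i _ => Finset.sum_congr rfl fun j _ => hGexp i j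
      _ = (∑ i : Fin (n+1), ∑ j : Fin (n+1),
            (pd n j) ∘ₗ (LinearMap.mulLeft ℝ (lam n i * lam n j)) ∘ₗ (pd n j)
          - ∑ i : Fin (n+1), ∑ j : Fin (n+1),
            (pd n j) ∘ₗ (LinearMap.mulLeft ℝ (lam n i * lam n j)) ∘ₗ (pd n i))
          - (∑ i : Fin (n+1), ∑ j : Fin (n+1),
            (pd n i) ∘ₗ (LinearMap.mulLeft ℝ (lam n i * lam n j)) ∘ₗ (pd n j)
          - ∑ i : Fin (n+1), ∑ j : Fin (n+1),
            (pd n i) ∘ₗ (LinearMap.mulLeft ℝ (lam n i * lam n j)) ∘ₗ (pd n i)) := by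
          simp only [Finset.sum_sub_distrib]
      _ = (F2 - Q ∘ₗ R) - (Q ∘ₗ R - F2) := by rw [e1, e2, e3, e4]
      _ = (F2 - Q ∘ₗ R) + (F2 - Q ∘ₗ R) := by abel
  set S : MvPolynomial (Fin n) ℝ →ₗ[ℝ] MvPolynomial (Fin n) ℝ :=
    ∑ i : Fin (n+1), ∑ j : Fin (n+1), (if i < j then G i j else 0) with hSdef
  have hsplit : ∀ i j : Fin (n+1),
      G i j = (if i < j then G i j else 0) + (if j < i then G i j else 0) := by
    intro i j
    rcases lt_trichotomy i j with h | h | h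
    · rw [if_pos h, if_neg (not_lt.2 h.le), add_zero]
    · subst h
      simp [Gdiag i]
    · rw [if_neg (not_lt.2 h.le), if_pos h, zero_add]
  have h2S : ∑ i : Fin (n+1), ∑ j : Fin (n+1), G i j = S + S := by
    calc ∑ i : Fin (n+1), ∑ j : Fin (n+1), G i j
        = ∑ i : Fin (n+1), ∑ j : Fin (n+1),
            ((if i < j then G i j else 0) + (if j < i then G i j else 0)) :=
          Finset.sum_congr rfl fun i _ => Finset.sum_congr rfl fun j _ => hsplit i j
      _ = S + ∑ i : Fin (n+1), ∑ j : Fin (n+1), (if j < i then G i j else 0) := by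
          simp only [Finset.sum_add_distrib, hSdef]
      _ = S + S := by
          congr 1
          rw [Finset.sum_comm]
          exact Finset.sum_congr rfl fun i _ => Finset.sum_congr rfl fun j _ => by
            rw [Gsymm j i]
  have hS : S = F2 - Q ∘ₗ R := by
    have h2 : (2 : ℝ) • S = (2 : ℝ) • (F2 - Q ∘ₗ R) := by
      rw [two_smul ℝ S, two_smul ℝ (F2 - Q ∘ₗ R), ← h2S, hsumG]
    have := congrArg (fun T : MvPolynomial (Fin n) ℝ →ₗ[ℝ] MvPolynomial (Fin n) ℝ =>
      (2⁻¹ : ℝ) • T) h2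
    simpa [smul_smul] using this
  have hbs : braessSchwab n = -S := rfl
  have hF2 : F2 = Fop n := by
    rw [hF2def, Fin.sum_univ_succ, pd_zero]
    simp only [LinearMap.comp_zero, LinearMap.zero_comp, zero_add]
    rw [Fop]
    exact Finset.sum_congr rfl fun j _ => by rw [pd_succ, lam_succ]
  have hR : R = Eop n := by
    rw [hRdef, Fin.sum_univ_succ, pd_zero]
    simp only [LinearMap.comp_zero, zero_add]
    rw [Eop]
    exact Finset.sum_congr rfl fun j _ => by rw [pd_succ, lam_succ]
  have leib : ∀ j : Fin n,
      (pderiv j).toLinearMap ∘ₗ LinearMap.mulLeft ℝ (X j : MvPolynomial (Fin n) ℝ)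
      = LinearMap.mulLeft ℝ (X j : MvPolynomial (Fin n) ℝ) ∘ₗ (pderiv j).toLinearMap
        + LinearMap.id := by
    intro j
    refine LinearMap.ext fun u => ?_
    simp only [LinearMap.comp_apply, LinearMap.mulLeft_apply, LinearMap.add_apply,
      LinearMap.id_apply]
    show pderiv j (X j * u) = X j * pderiv j u + u
    rw [pderiv_mul, pderiv_X_self, one_mul, add_comm]
  have hQ : Q = Eop n + (n : ℝ) • LinearMap.id := by
    rw [hQdef, Fin.sum_univ_succ, pd_zero]
    simp only [LinearMap.zero_comp, zero_add]
    calc ∑ j : Fin n, pd n j.succ ∘ₗ LinearMap.mulLeft ℝ (lam n j.succ)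
        = ∑ j : Fin n, (LinearMap.mulLeft ℝ (X j : MvPolynomial (Fin n) ℝ) ∘ₗ
            (pderiv j).toLinearMap + LinearMap.id) :=
          Finset.sum_congr rfl fun j _ => by rw [pd_succ, lam_succ, leib j]
      _ = Eop n + (n : ℝ) • LinearMap.id := by
          rw [Finset.sum_add_distrib, Finset.sum_const, Finset.card_univ, Fintype.card_fin, Eop,
            Nat.cast_smul_eq_nsmul ℝ n (LinearMap.id (R := ℝ) (M := MvPolynomial (Fin n) ℝ))]
  rw [hbs, hS, neg_sub, hQ, hR, hF2, LinearMap.add_comp, LinearMap.smul_comp, LinearMap.id_comp]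

/-! ### Action on monomials and degrees -/

lemma degree_eq_sum_univ {n : ℕ} (α : Fin n →₀ ℕ) : α.degree = ∑ j : Fin n, α j := by
  rw [Finsupp.degree]
  exact Finset.sum_subset (Finset.subset_univ _)
    (fun x _ hx => Finsupp.notMem_support_iff.mp hx)

lemma sum_eq_degree {n : ℕ} (α : Fin n →₀ ℕ) : (α.sum fun _ e => e) = α.degree := by
  rw [Finsupp.degree, Finsupp.sum]
  rfl

lemma Eop_monomial {n : ℕ} (α : Fin n →₀ ℕ) (c : ℝ) :
    Eop n (monomial α c) = (α.degree : ℝ) • monomial α c := by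
  rw [Eop]
  simp only [LinearMap.sum_apply, LinearMap.comp_apply, LinearMap.mulLeft_apply,
    Derivation.coeFn_coe]
  have step : ∀ j : Fin n, (X j : MvPolynomial (Fin n) ℝ) * pderiv j (monomial α c)
      = ((α j : ℕ) : ℝ) • monomial α c := by
    intro j
    rw [pderiv_monomial]
    by_cases h : α j = 0
    · simp [h]
    · have hle : Finsupp.single j 1 ≤ α := by
        rw [Finsupp.single_le_iff]
        omega
      rw [X, monomial_mul, add_tsub_cancel_of_le hle, smul_monomial]
      congr 1
      rw [smul_eq_mul, one_mul, mul_comm]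
  calc (∑ j : Fin n, (X j : MvPolynomial (Fin n) ℝ) * pderiv j (monomial α c))
      = ∑ j : Fin n, ((α j : ℕ) : ℝ) • monomial α c := Finset.sum_congr rfl fun j _ => step j
    _ = (α.degree : ℝ) • monomial α c := by
        rw [← Finset.sum_smul]
        congr 1
        rw [degree_eq_sum_univ, Nat.cast_sum]

lemma hc_monomial {n : ℕ} (d : ℕ) (α : Fin n →₀ ℕ) (c : ℝ) :
    homogeneousComponent d (monomial α c) = if d = α.degree then monomial α c else 0 :=
  homogeneousComponent_of_mem (isHomogeneous_monomial c rfl)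

lemma hc_comm_Eop {n : ℕ} (d : ℕ) :
    (homogeneousComponent d) ∘ₗ Eop n = Eop n ∘ₗ (homogeneousComponent d) := by
  refine MvPolynomial.linearMap_ext fun s => LinearMap.ext fun c => ?_
  simp only [LinearMap.comp_apply]
  rw [Eop_monomial, map_smul, hc_monomial]
  split_ifs with h
  · rw [Eop_monomial]
  · simp

lemma Eop_comp_hc {n : ℕ} (d : ℕ) :
    Eop n ∘ₗ (homogeneousComponent d) = (d : ℝ) • (homogeneousComponent d :
      MvPolynomial (Fin n) ℝ →ₗ[ℝ] MvPolynomial (Fin n) ℝ) := by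
  refine MvPolynomial.linearMap_ext fun s => LinearMap.ext fun c => ?_
  simp only [LinearMap.comp_apply, LinearMap.smul_apply]
  rw [hc_monomial]
  split_ifs with h
  · rw [Eop_monomial, h]
  · simp

lemma hc_Eop_apply {n : ℕ} (d : ℕ) (u : MvPolynomial (Fin n) ℝ) :
    homogeneousComponent d (Eop n u) = Eop n (homogeneousComponent d u) :=
  LinearMap.congr_fun (hc_comm_Eop d) u

lemma Eop_hc_apply {n : ℕ} (d : ℕ) (u : MvPolynomial (Fin n) ℝ) :
    Eop n (homogeneousComponent d u) = (d : ℝ) • homogeneousComponent d u :=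
  LinearMap.congr_fun (Eop_comp_hc d) u

lemma totalDegree_monomial_le {n : ℕ} (s : Fin n →₀ ℕ) (c : ℝ) :
    (monomial s c).totalDegree ≤ s.degree := by
  by_cases h : c = 0
  · simp [h]
  · rw [totalDegree_monomial s h, sum_eq_degree]

lemma degree_add {n : ℕ} (a b : Fin n →₀ ℕ) : (a + b).degree = a.degree + b.degree := by
  simp [degree_eq_sum_univ, Finsupp.add_apply, Finset.sum_add_distrib]

lemma degree_single_one {n : ℕ} (j : Fin n) : (Finsupp.single j 1 : Fin n →₀ ℕ).degree = 1 := by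
  simp [degree_eq_sum_univ, Finsupp.single_apply]

lemma pderiv_td {n : ℕ} (j : Fin n) {u : MvPolynomial (Fin n) ℝ} {m : ℕ}
    (h : u.totalDegree ≤ m + 1) : (pderiv j u).totalDegree ≤ m := by
  conv_lhs => rw [u.as_sum]
  rw [map_sum]
  refine (totalDegree_finset_sum _ _).trans (Finset.sup_le fun v hv => ?_)
  rw [pderiv_monomial]
  by_cases hj : v j = 0
  · simp [hj]
  · refine (totalDegree_monomial_le _ _).trans ?_
    have h2 : Finsupp.single j 1 ≤ v := by rw [Finsupp.single_le_iff]; omega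
    have h3 : (Finsupp.single j 1 + (v - Finsupp.single j 1)).degree = v.degree := by
      rw [add_tsub_cancel_of_le h2]
    rw [degree_add, degree_single_one] at h3
    have h4 : v.degree ≤ m + 1 := by
      rw [← sum_eq_degree]; exact (le_totalDegree hv).trans h
    omega

lemma Eop_td {n : ℕ} (u : MvPolynomial (Fin n) ℝ) :
    (Eop n u).totalDegree ≤ u.totalDegree := by
  conv_lhs => rw [u.as_sum]
  rw [map_sum]
  refine (totalDegree_finset_sum _ _).trans (Finset.sup_le fun v hv => ?_)
  rw [Eop_monomial]
  refine (totalDegree_smul_le _ _).trans ((totalDegree_monomial_le _ _).trans ?_)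
  rw [← sum_eq_degree]
  exact le_totalDegree hv

lemma Fop_td {n : ℕ} {u : MvPolynomial (Fin n) ℝ} {m : ℕ}
    (h : u.totalDegree ≤ m + 1) : (Fop n u).totalDegree ≤ m := by
  rw [Fop]
  simp only [LinearMap.sum_apply, LinearMap.comp_apply, LinearMap.mulLeft_apply,
    Derivation.coeFn_coe]
  refine (totalDegree_finset_sum _ _).trans (Finset.sup_le fun j _ => ?_)
  refine pderiv_td j ?_
  have h1 := pderiv_td j h
  have h2 := totalDegree_mul (X j : MvPolynomial (Fin n) ℝ) (pderiv j u)
  rw [totalDegree_X] at h2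
  exact h2.trans (by omega)

lemma pderiv_zero_of_td0 {n : ℕ} {u : MvPolynomial (Fin n) ℝ} (h : u.totalDegree = 0)
    (j : Fin n) : pderiv j u = 0 := by
  conv_lhs => rw [u.as_sum]
  rw [map_sum]
  refine Finset.sum_eq_zero fun v hv => ?_
  rw [pderiv_monomial]
  rw [totalDegree_eq_zero_iff] at h
  have hvj : v j = 0 := h v hv j
  simp [hvj]

lemma Fop_td0 {n : ℕ} {u : MvPolynomial (Fin n) ℝ} (h : u.totalDegree = 0) : Fop n u = 0 := by
  rw [Fop]
  simp only [LinearMap.sum_apply, LinearMap.comp_apply, LinearMap.mulLeft_apply,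
    Derivation.coeFn_coe]
  refine Finset.sum_eq_zero fun j _ => ?_
  rw [pderiv_zero_of_td0 h j, mul_zero, map_zero]

lemma hc_totalDegree_ne_zero {n : ℕ} {u : MvPolynomial (Fin n) ℝ} (h : u ≠ 0) :
    homogeneousComponent u.totalDegree u ≠ 0 := by
  obtain ⟨v, hv, hvd⟩ := Finset.exists_mem_eq_sup u.support (support_nonempty.mpr h)
      (fun s : Fin n →₀ ℕ => s.sum fun _ e => e)
  intro h0
  have hc : coeff v (homogeneousComponent u.totalDegree u) = coeff v u := by
    rw [coeff_homogeneousComponent, if_pos]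
    rw [← sum_eq_degree]
    rw [MvPolynomial.totalDegree]
    exact hvd.symm
  rw [h0, coeff_zero] at hc
  exact mem_support_iff.mp hv hc.symm

lemma eig_totalDegree {n p : ℕ} (hn : 1 ≤ n) {u : MvPolynomial (Fin n) ℝ}
    (hu : braessSchwab n u = ((p * (p + n) : ℕ) : ℝ) • u) (h0 : u ≠ 0) :
    u.totalDegree = p := by
  set d := u.totalDegree with hd
  have hw : homogeneousComponent d u ≠ 0 := hc_totalDegree_ne_zero h0
  have hT : homogeneousComponent d (braessSchwab n u)
      = ((d * (d + n) : ℕ) : ℝ) • homogeneousComponent d u := by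
    rw [braessSchwab_eq]
    simp only [LinearMap.sub_apply, LinearMap.add_apply, LinearMap.comp_apply,
      LinearMap.smul_apply]
    rw [map_sub, map_add, map_smul, hc_Eop_apply, hc_Eop_apply, Eop_hc_apply, map_smul,
      Eop_hc_apply]
    have hF : homogeneousComponent d (Fop n u) = 0 := by
      rcases Nat.eq_zero_or_pos d with hd0 | hd1
      · rw [Fop_td0 hd0, map_zero]
      · refine homogeneousComponent_eq_zero _ _ ?_
        have h1 : (Fop n u).totalDegree ≤ d - 1 :=
          Fop_td (by omega : u.totalDegree ≤ (d - 1) + 1)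
        omega
    rw [hF, sub_zero, smul_smul, smul_smul, ← add_smul]
    congr 1
    push_cast
    ring
  have hmu : ((p * (p + n) : ℕ) : ℝ) • homogeneousComponent d u
      = ((d * (d + n) : ℕ) : ℝ) • homogeneousComponent d u := by
    rw [← hT, hu, map_smul]
  have hcast : ((p * (p + n) : ℕ) : ℝ) = ((d * (d + n) : ℕ) : ℝ) := by
    by_contra hne
    have h2 : (((p * (p + n) : ℕ) : ℝ) - ((d * (d + n) : ℕ) : ℝ))
        • homogeneousComponent d u = 0 := by
      rw [sub_smul, hmu, sub_self]
    have h5 := congrArg (fun z : MvPolynomial (Fin n) ℝ =>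
      ((((p * (p + n) : ℕ) : ℝ) - ((d * (d + n) : ℕ) : ℝ))⁻¹) • z) h2
    simp only [smul_smul, smul_zero,
      inv_mul_cancel₀ (sub_ne_zero.mpr hne), one_smul] at h5
    exact hw h5
  have hnat : p * (p + n) = d * (d + n) := Nat.cast_injective hcast
  have mono : StrictMono (fun k : ℕ => k * (k + n)) := by
    intro a b hab
    have h1 : a * (a + n) ≤ a * (b + n) := Nat.mul_le_mul_left a (by omega)
    have h2 : a * (b + n) < b * (b + n) :=
      Nat.mul_lt_mul_of_lt_of_le hab (le_refl (b + n)) (by omega)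
    simpa using lt_of_le_of_lt h1 h2
  exact mono.injective hnat.symm

end BSAux

/-- The eigenspace `Φ_p = {u : 𝓛u = p(p+n)u}` of the Braess–Schwab operator on
`ℝ[x₁,…,xₙ]` is finite dimensional, consists of polynomials of total degree at
most `p`, and has dimension `C(p+n−1, n−1)`, the number of monomials in `n`
variables of total degree exactly `p`. -/
theorem braessSchwab_eigenspace_finrank
    (n : ℕ) (hn : 1 ≤ n) (p : ℕ) :
    FiniteDimensional ℝ
      (Module.End.eigenspace (braessSchwab n) ((p * (p + n) : ℕ) : ℝ)) ∧
    (∀ u ∈ Module.End.eigenspace (braessSchwab n) ((p * (p + n) : ℕ) : ℝ),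
      u.totalDegree ≤ p) ∧
    Module.finrank ℝ
        (Module.End.eigenspace (braessSchwab n) ((p * (p + n) : ℕ) : ℝ))
      = Nat.choose (p + n - 1) (n - 1) := by
  classical
  set μ : ℝ := ((p * (p + n) : ℕ) : ℝ) with hμ
  have hmem : ∀ u : MvPolynomial (Fin n) ℝ,
      u ∈ Module.End.eigenspace (braessSchwab n) μ ↔ braessSchwab n u = μ • u := fun u =>
    Module.End.mem_eigenspace_iff
  have hdeg : ∀ u ∈ Module.End.eigenspace (braessSchwab n) μ, u.totalDegree ≤ p := by
    intro u hu
    by_cases h0 : u = 0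
    · simp [h0]
    · exact (BSAux.eig_totalDegree hn ((hmem u).mp hu) h0).le
  set W := homogeneousSubmodule (Fin n) ℝ p with hW
  set φ : (Module.End.eigenspace (braessSchwab n) μ) →ₗ[ℝ] W :=
    LinearMap.codRestrict W ((homogeneousComponent p) ∘ₗ
      (Module.End.eigenspace (braessSchwab n) μ).subtype)
      (fun x => homogeneousComponent_mem p x.1) with hφ
  have hφval : ∀ x, (φ x : MvPolynomial (Fin n) ℝ) = homogeneousComponent p x.1 :=
    fun x => rfl
  have hinj : Function.Injective φ := by
    refine (injective_iff_map_eq_zero φ).mpr fun x hx => ?_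
    by_contra hne
    have hx1 : (x.1 : MvPolynomial (Fin n) ℝ) ≠ 0 := fun hc => hne (Subtype.ext hc)
    have hd := BSAux.eig_totalDegree hn ((hmem x.1).mp x.2) hx1
    have hne2 := BSAux.hc_totalDegree_ne_zero hx1
    rw [hd] at hne2
    apply hne2
    have : (φ x : MvPolynomial (Fin n) ℝ) = 0 := by rw [hx]; rfl
    rwa [hφval] at this
  have hsurj : Function.Surjective φ := by
    rintro ⟨w, hwmem⟩
    have hwh : w ∈ homogeneousSubmodule (Fin n) ℝ p := hwmem
    have hcw : homogeneousComponent p w = w := by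
      rw [homogeneousComponent_of_mem hwh, if_pos rfl]
    have hwd : w.totalDegree ≤ p := MvPolynomial.IsHomogeneous.totalDegree_le hwh
    have hEw : BSAux.Eop n w = (p : ℝ) • w := by
      conv_lhs => rw [← hcw]
      rw [BSAux.Eop_hc_apply, hcw]
    rcases Nat.eq_zero_or_pos p with hp0 | hpp
    · subst hp0
      refine ⟨⟨w, (hmem w).mpr ?_⟩, ?_⟩
      · rw [BSAux.braessSchwab_eq]
        simp only [LinearMap.sub_apply, LinearMap.add_apply, LinearMap.comp_apply,
          LinearMap.smul_apply]
        rw [hEw, BSAux.Fop_td0 (le_antisymm hwd (Nat.zero_le _))]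
        simp [hμ]
      · exact Subtype.ext (by rw [hφval]; exact hcw)
    · obtain ⟨m, rfl⟩ : ∃ m, p = m + 1 := ⟨p - 1, by omega⟩
      set V := restrictTotalDegree (Fin n) ℝ m with hV
      have hmapsto : ∀ v : MvPolynomial (Fin n) ℝ, v ∈ V →
          (braessSchwab n - μ • (LinearMap.id : MvPolynomial (Fin n) ℝ →ₗ[ℝ] MvPolynomial (Fin n) ℝ)) v ∈ V := by
        intro v hv
        rw [hV, mem_restrictTotalDegree] at hv ⊢
        simp only [LinearMap.sub_apply, LinearMap.smul_apply, LinearMap.id_apply]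
        refine (totalDegree_sub _ _).trans (max_le ?_ ?_)
        · rw [BSAux.braessSchwab_eq]
          simp only [LinearMap.sub_apply, LinearMap.add_apply, LinearMap.comp_apply,
            LinearMap.smul_apply]
          refine (totalDegree_sub _ _).trans
            (max_le ((totalDegree_add _ _).trans (max_le ?_ ?_)) ?_)
          · exact (BSAux.Eop_td _).trans ((BSAux.Eop_td _).trans hv)
          · exact (totalDegree_smul_le _ _).trans ((BSAux.Eop_td _).trans hv)
          · exact BSAux.Fop_td (hv.trans (by omega))
        · exact (totalDegree_smul_le _ _).trans hv
      set g : V →ₗ[ℝ] V := (braessSchwab n - μ • (LinearMap.id : MvPolynomial (Fin n) ℝ →ₗ[ℝ] MvPolynomial (Fin n) ℝ)).restrict hmapsto with hg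
      have hginj : Function.Injective g := by
        refine (injective_iff_map_eq_zero g).mpr fun x hx => ?_
        have hx0 : braessSchwab n x.1 - μ • x.1 = 0 := by
          have h5 := congrArg Subtype.val hx
          simpa [hg, LinearMap.restrict_apply] using h5
        have heig : braessSchwab n x.1 = μ • x.1 := by rwa [sub_eq_zero] at hx0
        by_contra hne
        have hx1 : (x.1 : MvPolynomial (Fin n) ℝ) ≠ 0 := fun hc => hne (Subtype.ext hc)
        have hd := BSAux.eig_totalDegree hn heig hx1
        have hvm : (x.1 : MvPolynomial (Fin n) ℝ).totalDegree ≤ m :=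
          (mem_restrictTotalDegree _ _ _).mp x.2
        omega
      have hgsurj : Function.Surjective g := LinearMap.injective_iff_surjective.mp hginj
      have hbV : BSAux.Fop n w ∈ V := (mem_restrictTotalDegree _ _ _).mpr (BSAux.Fop_td hwd)
      obtain ⟨r, hr⟩ := hgsurj ⟨BSAux.Fop n w, hbV⟩
      have hrval : braessSchwab n r.1 - μ • r.1 = BSAux.Fop n w := by
        have h5 := congrArg Subtype.val hr
        simpa [hg, LinearMap.restrict_apply] using h5
      have hrd : (r.1 : MvPolynomial (Fin n) ℝ).totalDegree ≤ m :=
        (mem_restrictTotalDegree _ _ _).mp r.2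
      have hTw : braessSchwab n w = μ • w - BSAux.Fop n w := by
        rw [BSAux.braessSchwab_eq]
        simp only [LinearMap.sub_apply, LinearMap.add_apply, LinearMap.comp_apply,
          LinearMap.smul_apply]
        rw [hEw, map_smul, hEw, smul_smul, smul_smul, ← add_smul, hμ]
        congr 1
        push_cast
        ring
      refine ⟨⟨w + r.1, (hmem _).mpr ?_⟩, ?_⟩
      · rw [map_add, hTw, sub_eq_iff_eq_add.mp hrval, smul_add]
        abel
      · refine Subtype.ext ?_
        rw [hφval]
        show homogeneousComponent (m + 1) (w + r.1) = w
        rw [map_add, hcw,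
          homogeneousComponent_eq_zero _ _ (lt_of_le_of_lt hrd (Nat.lt_succ_self m)),
          add_zero]
  -- dimension of W
  set sSet : Set (Fin n →₀ ℕ) := {d : Fin n →₀ ℕ | d.degree = p} with hsSet
  have hWr : W = restrictSupport ℝ sSet := by
    ext u
    rw [hW, mem_homogeneousSubmodule]
    constructor
    · intro h
      intro d hd
      have h1 : coeff d u ≠ 0 := mem_support_iff.mp hd
      have h2 := h h1
      show d.degree = p
      rw [Finsupp.degree_eq_weight_one]
      exact h2
    · intro h d hd
      have h1 : d ∈ u.support := mem_support_iff.mpr hd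
      have h2 : d.degree = p := h h1
      rw [Finsupp.degree_eq_weight_one] at h2
      exact h2
  have hdc : ∀ f : Fin n →₀ ℕ, f.degree = Multiset.card (Finsupp.toMultiset f) := by
    intro f
    rw [Finsupp.card_toMultiset]
    rfl
  set e : ↥sSet ≃ Sym (Fin n) p :=
    { toFun := fun d => ⟨Finsupp.toMultiset d.1, by rw [← hdc]; exact d.2⟩
      invFun := fun s => ⟨Multiset.toFinsupp s.1, by
        show (Multiset.toFinsupp s.1).degree = p
        rw [hdc, Multiset.toFinsupp_toMultiset]
        exact s.2⟩
      left_inv := fun d => Subtype.ext (by simp)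
      right_inv := fun s => Subtype.ext (by simp) } with he
  haveI finS : Fintype ↥sSet := Fintype.ofEquiv _ e.symm
  haveI hfinRS : FiniteDimensional ℝ ↥(restrictSupport ℝ sSet) :=
    Module.Finite.of_basis (basisRestrictSupport ℝ sSet)
  have hrank : Module.finrank ℝ ↥(restrictSupport ℝ sSet) = Fintype.card ↥sSet :=
    Module.finrank_eq_card_basis (basisRestrictSupport ℝ sSet)
  have hcard : Fintype.card ↥sSet = (n + p - 1).choose p := by
    rw [Fintype.card_congr e, Sym.card_sym_eq_choose, Fintype.card_fin]
  haveI hfinW : FiniteDimensional ℝ ↥W := by rw [hWr]; exact hfinRS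
  have hrankW : Module.finrank ℝ ↥W = (n + p - 1).choose p := by
    rw [hWr, hrank, hcard]
  set ψ := LinearEquiv.ofBijective φ ⟨hinj, hsurj⟩ with hψ
  haveI hfinE : FiniteDimensional ℝ (Module.End.eigenspace (braessSchwab n) μ) :=
    Module.Finite.equiv ψ.symm
  have hchoose : (p + n - 1).choose (n - 1) = (n + p - 1).choose p := by
    have h1 : p ≤ n + p - 1 := by omega
    have h2 : n + p - 1 - p = n - 1 := by omega
    rw [show p + n - 1 = n + p - 1 by omega, ← h2, Nat.choose_symm h1]
  refine ⟨hfinE, hdeg, ?_⟩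
  rw [ψ.finrank_eq, hrankW, hchoose]
end
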